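/- Let d ∈ ℕ, η ∈ (0,∞), let V: ℝ^d → ℝ be bounded below by −C for some C ≥ 0, let ℒ: ℝ^d → [0,∞), let (γ_n) ⊆ [0,∞) with Σ_{n=0}^∞ γ_n = ∞, and let (Θ_n) ⊆ ℝ^d satisfy for all n ∈ ℕ₀ that η·γ_n·ℒ(Θ_n) ≤ V(Θ_n) − V(Θ_{n+1}). Then Σ_{n=0}^∞ γ_n ℒ(Θ_n) ≤ (V(Θ₀) + C)/η < ∞ and consequently lim inf_{n→∞} ℒ(Θ_n) = 0. -/

import Mathlib

/-- Abstract summability argument: telescoping the Lyapunov decrease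
`η γ_n ℒ(Θ_n) ≤ V(Θ_n) − V(Θ_{n+1})` with `V ≥ −C` gives
`Σ_n γ_n ℒ(Θ_n) ≤ (V(Θ₀)+C)/η < ∞`, and together with `Σ_n γ_n = ∞` this forces
`lim inf_n ℒ(Θ_n) = 0`. -/
theorem stmt_15 (d : ℕ) (η : ℝ) (hη : 0 < η) (C : ℝ) (hC : 0 ≤ C)
    (V : EuclideanSpace ℝ (Fin d) → ℝ) (hVlb : ∀ θ, -C ≤ V θ)
    (Lo : EuclideanSpace ℝ (Fin d) → ℝ) (hLo : ∀ θ, 0 ≤ Lo θ)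
    (γ : ℕ → ℝ) (hγ : ∀ n, 0 ≤ γ n)
    (hdiv : Filter.Tendsto (fun N => ∑ n ∈ Finset.range N, γ n) Filter.atTop Filter.atTop)
    (Θ : ℕ → EuclideanSpace ℝ (Fin d))
    (hstep : ∀ n, η * γ n * Lo (Θ n) ≤ V (Θ n) - V (Θ (n+1))) :
    Summable (fun n => γ n * Lo (Θ n)) ∧
    (∑' n, γ n * Lo (Θ n)) ≤ (V (Θ 0) + C) / η ∧
    Filter.liminf (fun n => Lo (Θ n)) Filter.atTop = 0 := by
  have hnn : ∀ n, 0 ≤ γ n * Lo (Θ n) := fun n => mul_nonneg (hγ n) (hLo (Θ n))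
  -- partial sum bound
  have hpart : ∀ N, ∑ n ∈ Finset.range N, γ n * Lo (Θ n) ≤ (V (Θ 0) + C) / η := by
    intro N
    have h1 : ∑ n ∈ Finset.range N, η * (γ n * Lo (Θ n)) ≤ V (Θ 0) - V (Θ N) := by
      calc ∑ n ∈ Finset.range N, η * (γ n * Lo (Θ n))
          ≤ ∑ n ∈ Finset.range N, (V (Θ n) - V (Θ (n+1))) := by
            apply Finset.sum_le_sum
            intro n _
            have := hstep n
            linarith [hstep n, mul_assoc η (γ n) (Lo (Θ n))]
        _ = V (Θ 0) - V (Θ N) := by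
            rw [← Finset.sum_range_sub' (fun n => V (Θ n)) N]
    have h2 : η * ∑ n ∈ Finset.range N, γ n * Lo (Θ n) ≤ V (Θ 0) + C := by
      rw [Finset.mul_sum]
      have := hVlb (Θ N)
      linarith
    rw [div_eq_inv_mul, ← mul_le_mul_iff_right₀ hη, ← mul_assoc, mul_inv_cancel₀ hη.ne', one_mul]
    linarith
  have hsum : Summable (fun n => γ n * Lo (Θ n)) :=
    summable_of_sum_range_le hnn hpart
  refine ⟨hsum, Summable.tsum_le_of_sum_range_le hsum hpart, ?_⟩
  -- frequently small
  have hfreq : ∀ ε : ℝ, 0 < ε → ∃ᶠ n in Filter.atTop, Lo (Θ n) ≤ ε := by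
    intro ε hε
    by_contra h
    rw [Filter.not_frequently] at h
    simp only [Filter.eventually_atTop] at h
    obtain ⟨N, hN⟩ := h
    have hle : ∀ n, γ (n + N) ≤ ε⁻¹ * (γ (n + N) * Lo (Θ (n + N))) := by
      intro n
      have h1 : ε ≤ Lo (Θ (n + N)) := le_of_not_ge (hN (n + N) (Nat.le_add_left _ _))
      have h2 : ε * γ (n + N) ≤ Lo (Θ (n + N)) * γ (n + N) :=
        mul_le_mul_of_nonneg_right h1 (hγ _)
      have h3 : ε⁻¹ * (γ (n + N) * Lo (Θ (n + N))) = Lo (Θ (n + N)) * γ (n + N) / ε := by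
        field_simp
      rw [← le_div_iff₀' hε] at h2
      linarith [h2, h3.ge, h3.le]
    have hsum2 : Summable (fun n => γ (n + N)) :=
      Summable.of_nonneg_of_le (fun n => hγ _) hle
        (((summable_nat_add_iff N).2 hsum).mul_left ε⁻¹)
    have hsumγ : Summable γ := (summable_nat_add_iff N).1 hsum2
    exact (hsumγ.hasSum.tendsto_sum_nat.not_tendsto (disjoint_nhds_atTop _)) hdiv
  have hbdd : Filter.IsBoundedUnder (· ≥ ·) Filter.atTop (fun n => Lo (Θ n)) :=
    ⟨0, Filter.eventually_map.2 (Filter.Eventually.of_forall fun n => hLo (Θ n))⟩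
  have hcobdd : Filter.IsCoboundedUnder (· ≥ ·) Filter.atTop (fun n => Lo (Θ n)) := by
    refine ⟨1, fun a ha => ?_⟩
    rw [Filter.eventually_map] at ha
    obtain ⟨n, h1, h2⟩ := ((hfreq 1 one_pos).and_eventually ha).exists
    exact le_trans h2 h1
  refine le_antisymm ?_ (Filter.le_liminf_of_le hcobdd
    (Filter.Eventually.of_forall (fun n => hLo _)))
  by_contra h
  push_neg at h
  obtain ⟨ε, hε1, hε2⟩ := exists_between h
  exact absurd (Filter.liminf_le_of_frequently_le (hfreq ε hε1) hbdd) (not_le.2 hε2)
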